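/- The derivation D = x^2 ∂/∂u - 2yu ∂/∂v of the polynomial ring ℂ[x,y,u,v] is locally nilpotent and annihilates the polynomial f = x^2(x-1)v + yu^2 - x, hence induces a locally nilpotent derivation on the quotient ring ℂ[x,y,u,v]/(f). -/
import Mathlib

open MvPolynomial Finset

section aux
variable {R A : Type*} [CommRing R] [CommRing A] [Algebra R A] (D : Derivation R A A)

lemma iter_zero (n : ℕ) : (⇑D)^[n] (0:A) = 0 := by
  induction n with
  | zero => rfl
  | succ n ih => rw [Function.iterate_succ_apply, map_zero, ih]

lemma iter_leibniz (a b : A) (n : ℕ) :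
    (⇑D)^[n] (a * b) = ∑ k ∈ range (n+1), (n.choose k) • ((⇑D)^[k] a * (⇑D)^[n-k] b) := by
  induction n with
  | zero => simp
  | succ n ih =>
    rw [Function.iterate_succ_apply', ih, map_sum]
    have h1 : ∀ k, D ((n.choose k) • ((⇑D)^[k] a * (⇑D)^[n-k] b)) =
        (n.choose k) • ((⇑D)^[k+1] a * (⇑D)^[n-k] b)
        + (n.choose k) • ((⇑D)^[k] a * (⇑D)^[n-k+1] b) := by
      intro k
      rw [D.map_smul_of_tower, Derivation.leibniz, smul_add, smul_eq_mul, smul_eq_mul,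
        Function.iterate_succ_apply', Function.iterate_succ_apply',
        mul_comm ((⇑D)^[n-k] b), add_comm]
    simp only [h1, Finset.sum_add_distrib]
    conv_rhs => rw [Finset.sum_range_succ']
    simp only [Nat.choose_succ_succ, add_smul, Finset.sum_add_distrib, Nat.choose_zero_right,
      one_smul, Nat.succ_sub_succ, Nat.sub_zero]
    rw [Finset.sum_range_succ (fun j => n.choose (j+1) • ((⇑D)^[j+1] a * (⇑D)^[n-j] b)) n]
    simp only [Nat.choose_succ_self, zero_smul, add_zero]
    rw [Finset.sum_range_succ' (fun k => n.choose k • ((⇑D)^[k] a * (⇑D)^[n-k+1] b)) n]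
    simp only [Nat.choose_zero_right, one_smul, Nat.sub_zero]
    have h2 : ∀ k ∈ range n, n.choose (k+1) • ((⇑D)^[k+1] a * (⇑D)^[n-(k+1)+1] b)
        = n.choose (k+1) • ((⇑D)^[k+1] a * (⇑D)^[n-k] b) := by
      intro k hk
      have : n - (k+1) + 1 = n - k := by
        have := Finset.mem_range.mp hk; omega
      rw [this]
    rw [Finset.sum_congr rfl h2]
    abel

lemma iter_mul_zero {a b : A} {m l : ℕ} (ha : (⇑D)^[m] a = 0) (hb : (⇑D)^[l] b = 0) :
    (⇑D)^[m + l] (a * b) = 0 := by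
  rw [iter_leibniz]
  apply Finset.sum_eq_zero
  intro k hk
  rcases le_or_gt m k with h | h
  · have : (⇑D)^[k] a = 0 := by
      rw [show k = (k - m) + m by omega, Function.iterate_add_apply, ha, iter_zero]
    rw [this, zero_mul, smul_zero]
  · have : (⇑D)^[m + l - k] b = 0 := by
      rw [show m + l - k = (m + l - k - l) + l by omega, Function.iterate_add_apply, hb, iter_zero]
    rw [this, mul_zero, smul_zero]

lemma iter_add_zero {a b : A} {m l : ℕ} (ha : (⇑D)^[m] a = 0) (hb : (⇑D)^[l] b = 0) :
    (⇑D)^[max m l] (a + b) = 0 := by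
  have : ∀ x : A, ∀ j k : ℕ, j ≤ k → (⇑D)^[j] x = 0 → (⇑D)^[k] x = 0 := by
    intro x j k hjk hx
    rw [show k = (k - j) + j by omega, Function.iterate_add_apply, hx, iter_zero]
  have hD : ∀ j : ℕ, ∀ x y : A, (⇑D)^[j] (x + y) = (⇑D)^[j] x + (⇑D)^[j] y := by
    intro j; induction j with
    | zero => intro x y; rfl
    | succ j ih => intro x y; simp [Function.iterate_succ_apply, map_add, ih]
  rw [hD, this a m (max m l) (le_max_left _ _) ha, this b l (max m l) (le_max_right _ _) hb,
    add_zero]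

end aux

/-- A derivation `D` is locally nilpotent if every element is annihilated by some
iterate of `D`. -/
def Derivation.IsLocallyNilpotent {R A : Type*} [CommRing R] [CommRing A] [Algebra R A]
    (D : Derivation R A A) : Prop :=
  ∀ a : A, ∃ n : ℕ, (⇑D)^[n] a = 0

/-- Coordinates on `𝔸⁴`: `x = X 0`, `y = X 1`, `u = X 2`, `v = X 3`. -/
noncomputable abbrev R4 : Type := MvPolynomial (Fin 4) ℂ

/-- The `ℂ[x,y]`-derivation `D = x²(x-1) ∂/∂u - 2yu ∂/∂v` of `ℂ[x,y,u,v]`. -/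
noncomputable def D0 : Derivation ℂ R4 R4 :=
  MvPolynomial.mkDerivation ℂ
    (fun i => if i = 2 then (X 0) ^ 2 * (X 0 - 1)
              else if i = 3 then -(2 * X 1 * X 2) else 0)

lemma D0_X0 : D0 (X 0) = 0 := by simp [D0, mkDerivation_X]
lemma D0_X1 : D0 (X 1) = 0 := by simp [D0, mkDerivation_X]
lemma D0_X2 : D0 (X 2) = (X 0) ^ 2 * (X 0 - 1) := by simp [D0, mkDerivation_X]
lemma D0_X3 : D0 (X 3) = -(2 * X 1 * X 2) := by simp [D0, mkDerivation_X]

lemma D0_two : D0 (2 : R4) = 0 := D0.map_natCast 2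

lemma D0_x2x1 : D0 ((X 0) ^ 2 * (X 0 - 1)) = 0 := by
  simp [Derivation.leibniz, Derivation.leibniz_pow, D0_X0]

lemma D0_iter_X0 : (⇑D0)^[1] (X 0) = 0 := by simp [D0_X0]
lemma D0_iter_X1 : (⇑D0)^[1] (X 1) = 0 := by simp [D0_X1]
lemma D0_iter_X2 : (⇑D0)^[2] (X 2) = 0 := by
  simp [Function.iterate_succ_apply, D0_X2, D0_x2x1, D0_X0]
lemma D0_iter_X3 : (⇑D0)^[3] (X 3) = 0 := by
  have h1 : D0 (-(2 * X 1 * X 2)) = -(2 * X 1 * ((X 0) ^ 2 * (X 0 - 1))) := by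
    simp [Derivation.leibniz, D0_X1, D0_X2, D0_two, smul_eq_mul]
    try ring
  have h2 : D0 (-(2 * X 1 * ((X 0) ^ 2 * (X 0 - 1)))) = 0 := by
    simp [Derivation.leibniz, Derivation.leibniz_pow, D0_X0, D0_X1, D0_two]
  simp [Function.iterate_succ_apply, D0_X3, h1, h2]

lemma D0_locallyNilpotent : D0.IsLocallyNilpotent := by
  intro p
  induction p using MvPolynomial.induction_on with
  | C a => exact ⟨1, by simp [Derivation.map_algebraMap D0 a]⟩
  | add p q hp hq =>
    obtain ⟨m, hm⟩ := hp; obtain ⟨l, hl⟩ := hq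
    exact ⟨max m l, iter_add_zero D0 hm hl⟩
  | mul_X p i hp =>
    obtain ⟨m, hm⟩ := hp
    have hX : ∃ l, (⇑D0)^[l] (X i : R4) = 0 := by
      fin_cases i
      · exact ⟨1, D0_iter_X0⟩
      · exact ⟨1, D0_iter_X1⟩
      · exact ⟨2, D0_iter_X2⟩
      · exact ⟨3, D0_iter_X3⟩
    obtain ⟨l, hl⟩ := hX
    exact ⟨m + l, iter_mul_zero D0 hm hl⟩

/-- `f = x²(x-1)v + yu² - x`. -/
noncomputable def f0 : R4 := (X 0) ^ 2 * (X 0 - 1) * X 3 + X 1 * (X 2) ^ 2 - X 0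

lemma D0_f0 : D0 f0 = 0 := by
  unfold f0
  simp [Derivation.leibniz, Derivation.leibniz_pow, D0_X0, D0_X1, D0_X2, D0_X3, smul_eq_mul]
  try ring

theorem stmt_0 :
    D0.IsLocallyNilpotent ∧ D0 f0 = 0 ∧
      ∀ g ∈ Ideal.span {f0}, D0 g ∈ Ideal.span {f0} := by
  refine ⟨D0_locallyNilpotent, D0_f0, ?_⟩
  intro g hg
  rw [Ideal.mem_span_singleton] at hg ⊢
  obtain ⟨c, rfl⟩ := hg
  rw [Derivation.leibniz, D0_f0, smul_zero, add_zero, smul_eq_mul]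
  exact ⟨D0 c, rfl⟩
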